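/- Let m ≥ 2, ζ_c, ζ_p ∈ [0,1], and for each i ∈ {2,…,m} let v_{c,i}, v_{p,i} ≥ 0 and c₁ − cᵢ > 0. For each positive integer k define σᵢ(k)² = ((1 + ζ_c(k−1))/k)·v_{c,i} + ((1 + ζ_p(k−1))/k)·v_{p,i} and L(k) = 1 − Σ_{i=2}^m σᵢ(k)²/(c₁ − cᵢ)². Then L(k) is nondecreasing in k, and L(k) → 1 − Σ_{i=2}^m (ζ_c·v_{c,i} + ζ_p·v_{p,i})/(c₁ − cᵢ)² as k → ∞. In particular, if ζ_c = ζ_p = 0 then L(k) = 1 − (1/k)·Σ_{i=2}^m (v_{c,i} + v_{p,i})/(c₁ − cᵢ)² → 1. -/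

import Mathlib

/-- **Monotonicity and limit of the Chebyshev success-probability bound in ensemble size.**
With margin variances
`σᵢ(k)² = ((1 + ζ_c(k−1))/k)·v_{c,i} + ((1 + ζ_p(k−1))/k)·v_{p,i}` and the Chebyshev
lower bound `L(k) = 1 − Σᵢ σᵢ(k)²/(c₁ − cᵢ)²` on the ensemble's success probability,
`L` is nondecreasing in `k` and tends to
`1 − Σᵢ (ζ_c v_{c,i} + ζ_p v_{p,i})/(c₁ − cᵢ)²`. In particular, if `ζ_c = ζ_p = 0`
then `L(k) = 1 − (1/k)·Σᵢ (v_{c,i} + v_{p,i})/(c₁ − cᵢ)² → 1`. -/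
theorem chebyshev_bound_monotone_in_ensemble_size
    (m : ℕ) (hm : 2 ≤ m)
    (ζc ζp : ℝ) (hζc : ζc ∈ Set.Icc (0:ℝ) 1) (hζp : ζp ∈ Set.Icc (0:ℝ) 1)
    (vc vp : Fin (m - 1) → ℝ) (hvc : ∀ i, 0 ≤ vc i) (hvp : ∀ i, 0 ≤ vp i)
    (c1 : ℝ) (ci : Fin (m - 1) → ℝ) (hpos : ∀ i, 0 < c1 - ci i)
    (σ2 : ℕ → Fin (m - 1) → ℝ)
    (hσ2 : ∀ (k : ℕ) (i : Fin (m - 1)),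
      σ2 k i = (1 + ζc * ((k : ℝ) - 1)) / (k : ℝ) * vc i
             + (1 + ζp * ((k : ℝ) - 1)) / (k : ℝ) * vp i)
    (L : ℕ → ℝ)
    (hL : ∀ k : ℕ, L k = 1 - ∑ i, σ2 k i / (c1 - ci i) ^ 2) :
    (∀ k l : ℕ, 1 ≤ k → k ≤ l → L k ≤ L l) ∧
    Filter.Tendsto L Filter.atTop
      (nhds (1 - ∑ i, (ζc * vc i + ζp * vp i) / (c1 - ci i) ^ 2)) ∧
    (ζc = 0 → ζp = 0 →
      (∀ k : ℕ, 1 ≤ k →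
        L k = 1 - (1 / (k : ℝ)) * ∑ i, (vc i + vp i) / (c1 - ci i) ^ 2) ∧
      Filter.Tendsto L Filter.atTop (nhds 1)) := by
  set A : ℝ := 1 - ∑ i, (ζc * vc i + ζp * vp i) / (c1 - ci i) ^ 2 with hA
  set B : ℝ := ∑ i, ((1 - ζc) * vc i + (1 - ζp) * vp i) / (c1 - ci i) ^ 2 with hB
  have hBnn : 0 ≤ B := by
    apply Finset.sum_nonneg
    intro i _
    apply div_nonneg
    · have := hζc.2; have := hζp.2
      have := hvc i; have := hvp i
      nlinarith
    · positivity
  have key : ∀ k : ℕ, 1 ≤ k → L k = A - (1 / (k : ℝ)) * B := by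
    intro k hk
    have hk0 : (k : ℝ) ≠ 0 := Nat.cast_ne_zero.mpr (by omega)
    rw [hL k, hA, hB, Finset.mul_sum]
    have : ∀ i : Fin (m - 1), σ2 k i / (c1 - ci i) ^ 2
        = (ζc * vc i + ζp * vp i) / (c1 - ci i) ^ 2
          + 1 / (k : ℝ) * (((1 - ζc) * vc i + (1 - ζp) * vp i) / (c1 - ci i) ^ 2) := by
      intro i
      have hd : (c1 - ci i) ^ 2 ≠ 0 := pow_ne_zero 2 (ne_of_gt (hpos i))
      rw [hσ2 k i]
      field_simp
      ring
    rw [Finset.sum_congr rfl fun i _ => this i, Finset.sum_add_distrib]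
    ring
  have hinv : Filter.Tendsto (fun k : ℕ => 1 / (k : ℝ)) Filter.atTop (nhds 0) := by
    simpa using tendsto_one_div_atTop_nhds_zero_nat (𝕜 := ℝ)
  have hTend : Filter.Tendsto L Filter.atTop (nhds A) := by
    have h1 : Filter.Tendsto (fun k : ℕ => A - (1 / (k : ℝ)) * B) Filter.atTop
        (nhds (A - 0 * B)) :=
      (tendsto_const_nhds.sub (hinv.mul tendsto_const_nhds))
    rw [zero_mul, sub_zero] at h1
    apply h1.congr'
    filter_upwards [Filter.eventually_ge_atTop 1] with k hk
    exact (key k hk).symm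
  refine ⟨?_, hTend, ?_⟩
  · intro k l hk hl
    rw [key k hk, key l (hk.trans hl)]
    have hkpos : (0:ℝ) < (k:ℝ) := by exact_mod_cast Nat.lt_of_lt_of_le Nat.zero_lt_one hk
    have hlpos : (0:ℝ) < (l:ℝ) := by
      exact_mod_cast Nat.lt_of_lt_of_le Nat.zero_lt_one (hk.trans hl)
    have : 1 / (l : ℝ) ≤ 1 / (k : ℝ) := by
      apply one_div_le_one_div_of_le hkpos
      exact_mod_cast hl
    nlinarith
  · intro hc hp
    constructor
    · intro k hk
      rw [key k hk, hA, hB, hc, hp]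
      simp
    · have : A = 1 := by
        rw [hA, hc, hp]; simp
      rwa [this] at hTend
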